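/- Let n ≡ 1 (mod 4) be a positive odd square-free integer all of whose prime divisors are ≡ 1 (mod 4), and let x_j = (j | n/gcd(j,n)) be the Jacobi sequence of length n extended n-periodically. Define the negaperiodic sequence u_j = (−1)^{j(j−1)/2} x_j for j ∈ ℤ (4n-periodic). Then for every nonnegative integer s, the binary sequence (u_{n−s}, u_{n−s+1}, ..., u_{n+s}) of length 2s+1 is skew-symmetric, i.e., writing a_k = u_{n−s+k} for 0 ≤ k ≤ 2s, we have a_{s+j} = (−1)^j a_{s−j} for all 1 ≤ j ≤ s. -/

import Mathlib

private theorem gcdshift (j : ℤ) (n : ℕ) : Int.gcd ((n:ℤ) + j) n = Int.gcd j n := by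
  apply Nat.dvd_antisymm
  · apply Int.dvd_gcd
    · have h1 : ((Int.gcd ((n:ℤ)+j) n : ℕ) : ℤ) ∣ (n:ℤ) + j := Int.gcd_dvd_left _ _
      have h2 : ((Int.gcd ((n:ℤ)+j) n : ℕ) : ℤ) ∣ (n:ℤ) := Int.gcd_dvd_right _ _
      simpa using dvd_sub h1 h2
    · exact Int.gcd_dvd_right _ _
  · exact Int.dvd_gcd (dvd_add (Int.gcd_dvd_right _ _) (Int.gcd_dvd_left _ _)) (Int.gcd_dvd_right _ _)

private theorem gcdneg (j : ℤ) (n : ℕ) : Int.gcd (-j) n = Int.gcd j n := by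
  simp [Int.gcd]

private theorem mod4one {n : ℕ} (hsf : Squarefree n)
    (hp : ∀ p : ℕ, p.Prime → p ∣ n → p % 4 = 1) {m : ℕ} (hm : m ∣ n) : m % 4 = 1 := by
  have hmsf : Squarefree m := hsf.squarefree_of_dvd hm
  have hcast : (m : ZMod 4) = 1 := by
    conv_lhs => rw [← Nat.prod_primeFactors_of_squarefree hmsf]
    push_cast
    apply Finset.prod_eq_one
    intro p hpmem
    have hpp : p.Prime := Nat.prime_of_mem_primeFactors hpmem
    have hpdvd : p ∣ n := (Nat.dvd_of_mem_primeFactors hpmem).trans hm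
    have h1 := hp p hpp hpdvd
    calc (p : ZMod 4) = ((p % 4 + 4 * (p / 4) : ℕ) : ZMod 4) := by
          rw [Nat.mod_add_div]
      _ = 1 := by push_cast [h1]; rw [show (4:ZMod 4) = 0 from rfl]; ring
  have : (m : ZMod 4).val = (1 : ZMod 4).val := by rw [hcast]
  rwa [ZMod.val_natCast, show (1 : ZMod 4).val = 1 from rfl] at this

private theorem neg_one_zpow_even (k : ℤ) (hk : Even k) : (-1 : ℤˣ) ^ k = 1 := by
  obtain ⟨c, hc⟩ := hk
  have : k = 2 * c := by omega
  rw [this, zpow_mul, show (-1 : ℤˣ) ^ (2:ℤ) = 1 from by decide, one_zpow]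

private theorem neg_one_zpow_congr {a b : ℤ} (h : a % 2 = b % 2) :
    (-1 : ℤˣ) ^ a = (-1 : ℤˣ) ^ b := by
  have h1 : (-1 : ℤˣ) ^ a = (-1 : ℤˣ) ^ (a - b) * (-1 : ℤˣ) ^ b := by
    rw [← zpow_add]; ring_nf
  rw [h1, neg_one_zpow_even _ (Int.even_iff.mpr (by omega)), one_mul]

theorem jacobi_negaperiodic_skew_symmetric (n : ℕ) (hn : 0 < n) (hodd : Odd n)
    (hsf : Squarefree n) (hp : ∀ p : ℕ, p.Prime → p ∣ n → p % 4 = 1)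
    (x : ℤ → ℤ) (hx : ∀ j : ℤ, x j = jacobiSym j (n / Int.gcd j n))
    (u : ℤ → ℤ)
    (hu : ∀ j : ℤ, u j = (((-1 : ℤˣ) ^ (j * (j - 1) / 2) : ℤˣ) : ℤ) * x j)
    (s : ℕ) (a : ℕ → ℤ) (ha : ∀ k : ℕ, a k = u ((n : ℤ) - (s : ℤ) + (k : ℤ))) :
    ∀ j : ℕ, 1 ≤ j → j ≤ s → a (s + j) = (-1) ^ j * a (s - j) := by
  intro j hj1 hj2
  have key : ∀ jz : ℤ, u ((n:ℤ) + jz) = ((-1 : ℤˣ) ^ jz : ℤˣ) * u ((n:ℤ) - jz) := by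
    intro jz
    have hg : Int.gcd ((n:ℤ) + jz) n = Int.gcd jz n := gcdshift jz n
    have hg' : Int.gcd ((n:ℤ) - jz) n = Int.gcd jz n := by
      rw [sub_eq_add_neg, gcdshift, gcdneg]
    set m : ℕ := n / Int.gcd jz n with hmdef
    have hgdvd : Int.gcd jz n ∣ n := by
      simpa [Int.gcd] using Nat.gcd_dvd_right jz.natAbs n
    have hmdvd : m ∣ n := Nat.div_dvd_of_dvd hgdvd
    have hm4 : m % 4 = 1 := mod4one hsf hp hmdvd
    have hmodd : Odd m := Nat.odd_iff.mpr (Nat.odd_of_mod_four_eq_one hm4)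
    -- x part
    have hmint : (m : ℤ) ∣ (n : ℤ) := Int.natCast_dvd_natCast.mpr hmdvd
    obtain ⟨t, ht⟩ := hmint
    have hxplus : x ((n:ℤ) + jz) = jacobiSym jz m := by
      rw [hx, hg, ← hmdef]
      apply jacobiSym.mod_left'
      rw [ht, add_comm]
      exact Int.add_mul_emod_self_left jz (m:ℤ) t
    have hxminus : x ((n:ℤ) - jz) = jacobiSym jz m := by
      rw [hx, hg', ← hmdef]
      have h1 : jacobiSym ((n:ℤ) - jz) m = jacobiSym (-jz) m := by
        apply jacobiSym.mod_left'
        rw [ht, sub_eq_add_neg, add_comm]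
        exact Int.add_mul_emod_self_left (-jz) (m:ℤ) t
      rw [h1, jacobiSym.neg jz hmodd, ZMod.χ₄_nat_one_mod_four hm4, one_mul]
    -- sign part
    have hsign : (-1 : ℤˣ) ^ (((n:ℤ) + jz) * (((n:ℤ) + jz) - 1) / 2)
        = (-1 : ℤˣ) ^ jz * (-1 : ℤˣ) ^ (((n:ℤ) - jz) * (((n:ℤ) - jz) - 1) / 2) := by
      rw [← zpow_add]
      apply neg_one_zpow_congr
      obtain ⟨d, hd⟩ : ∃ d : ℤ, d = (n:ℤ)*jz := ⟨_, rfl⟩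
      have hprod : ((n:ℤ) + jz) * (((n:ℤ) + jz) - 1)
          = ((n:ℤ) - jz) * (((n:ℤ) - jz) - 1) + (2*d - jz) * 2 := by rw [hd]; ring
      have heven : Even (((n:ℤ) - jz) * (((n:ℤ) - jz) - 1)) := by
        rcases Int.even_or_odd ((n:ℤ) - jz) with h | h
        · exact h.mul_right _
        · have he : Even ((n:ℤ) - jz - 1) := by
            obtain ⟨c, hc⟩ := h; exact ⟨c, by omega⟩
          exact he.mul_left _
      obtain ⟨c, hc⟩ := heven
      omega
    rw [hu, hu, hxplus, hxminus, hsign]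
    push_cast
    ring
  have hone : a (s + j) = u ((n:ℤ) + j) := by
    rw [ha]; congr 1; push_cast; ring
  have htwo : a (s - j) = u ((n:ℤ) - j) := by
    rw [ha]; congr 1; push_cast [Nat.cast_sub hj2]; ring
  rw [hone, htwo, key (j : ℤ), zpow_natCast]
  push_cast
  ring
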